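/- Canonical names for finite-type objects are injective and absolute: for a pca A over 𝔽 and every finite type σ, (i) the name ẋ is injective for every x ∈ F_σ; (ii) the name Ḟ_σ is injective; (iii) if some a ∈ A realizes ẋ = ẏ for x, y ∈ F_σ, then x = y. -/
import Mathlib


/-- The von Neumann numeral of `n`. -/
def natEmbed : ℕ → ZFSet
  | 0 => ∅
  | n + 1 => insert (natEmbed n) (natEmbed n)

/-- Finite types: the ground type `o` and arrow types `(σ)τ`. -/
inductive FType : Type
  | o : FType
  | arrow : FType → FType → FType

/-- The set-theoretic extension of a finite type: `F_o = ω` and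
`F_{(σ)τ}` is the set of all total (set) functions from `F_σ` to `F_τ`. -/
def Fext : FType → ZFSet
  | .o => ZFSet.omega
  | .arrow σ τ => ZFSet.funs (Fext σ) (Fext τ)

/-- Lifting of a partial binary application to `Option`. -/
def oap {A : Type} (app : A → A → Option A) (x y : Option A) : Option A :=
  x.bind fun a => y.bind fun b => app a b

/-- A partial combinatory algebra, together with chosen pairing and projection
combinators (which exist in any pca). -/
structure PCA (A : Type) where
  app : A → A → Option A
  k : A
  s : A
  pairc : A
  pr0 : A
  pr1 : A
  nontrivial : ∃ a b : A, a ≠ b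
  k_def : ∀ a : A, (app k a).isSome
  s_def : ∀ a : A, (app s a).isSome
  s2_def : ∀ a b : A, (oap app (app s a) (some b)).isSome
  k_spec : ∀ a b : A, oap app (app k a) (some b) = some a
  s_spec : ∀ a b c : A, oap app (oap app (app s a) (some b)) (some c)
      = oap app (oap app (some a) (some c)) (oap app (some b) (some c))
  pair_def : ∀ a b : A, (oap app (app pairc a) (some b)).isSome
  pr0_spec : ∀ a b : A, oap app (some pr0) (oap app (app pairc a) (some b)) = some a
  pr1_spec : ∀ a b : A, oap app (some pr1) (oap app (app pairc a) (some b)) = some b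
/-- Names in the realizability structure `V_tr(A)`: a name is a pair
`⟨x, x̂⟩` of a set `x` together with a family (the set `x̂ ⊆ A × V_tr(A)`) of
labelled names. -/
inductive VName (A : Type) : Type 2
  | mk (deg : ZFSet.{0}) (ι : Type 1) (lab : ι → A) (elt : ι → VName A)

/-- The truth component `x°` (first component) of a name. -/
def VName.deg {A : Type} : VName A → ZFSet
  | .mk x _ _ _ => x

/-- The index type of the second component `x*` of a name. -/
def VName.ι {A : Type} : VName A → Type 1
  | .mk _ i _ _ => i

/-- The labels (realizers) of the second component `x*`. -/
def VName.lab {A : Type} : (v : VName A) → v.ι → A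
  | .mk _ _ l _ => l

/-- The members of the second component `x*`. -/
def VName.elt {A : Type} : (v : VName A) → v.ι → VName A
  | .mk _ _ _ e => e

/-- A pair `⟨x, x̂⟩` is a genuine member of `V_tr(A)` when, hereditarily,
`u° ∈ x` for every `⟨a,u⟩ ∈ x̂`. -/
def VName.IsName {A : Type} : VName A → Prop
  | .mk x _ _ e => (∀ i, (e i).deg ∈ x) ∧ ∀ i, (e i).IsName
mutual
/-- Atomic realizability with truth for equality: `a ⊩ x = y` iff `x° = y°`,
every `⟨b,z⟩ ∈ x*` yields `(a·b)₀ ⊩ z ∈ y`, and every `⟨b,z⟩ ∈ y*` yields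
`(a·b)₁ ⊩ z ∈ x`.  (The witnessing applications are given by the functions
`bf, cf, bg, cg`.) -/
inductive RealEq {A : Type} (P : PCA A) : A → VName A → VName A → Prop
  | intro (a : A) (x y : VName A)
      (bf cf : x.ι → A) (bg cg : y.ι → A) :
      x.deg = y.deg →
      (∀ i : x.ι, P.app a (x.lab i) = some (bf i)) →
      (∀ i : x.ι, P.app P.pr0 (bf i) = some (cf i)) →
      (∀ i : x.ι, RealMem P (cf i) (x.elt i) y) →
      (∀ j : y.ι, P.app a (y.lab j) = some (bg j)) →
      (∀ j : y.ι, P.app P.pr1 (bg j) = some (cg j)) →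
      (∀ j : y.ι, RealMem P (cg j) (y.elt j) x) →
      RealEq P a x y

/-- Atomic realizability with truth for membership: `a ⊩ x ∈ y` iff
`x° ∈ y°` and there is `⟨a₀,z⟩ ∈ y*` with `a₁ ⊩ x = z`. -/
inductive RealMem {A : Type} (P : PCA A) : A → VName A → VName A → Prop
  | intro (a : A) (x y : VName A) (j : y.ι) (c : A) :
      x.deg ∈ y.deg →
      P.app P.pr0 a = some (y.lab j) →
      P.app P.pr1 a = some c →
      RealEq P c x (y.elt j) →
      RealMem P a x y
end
/-- A pca over `𝔽`: a pca with a one-to-one map `x ↦ x̄` from `𝔽 = ⋃_σ F_σ`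
into `A` respecting application, together with numeral combinators. -/
structure PCAF (A : Type) extends PCA A where
  bar : ZFSet → A
  bar_inj : ∀ u v : ZFSet, (∃ σ, u ∈ Fext σ) → (∃ τ, v ∈ Fext τ) →
    bar u = bar v → u = v
  bar_app : ∀ (σ τ : FType) (f x y : ZFSet), f ∈ Fext (.arrow σ τ) →
    x ∈ Fext σ → ZFSet.pair x y ∈ f → app (bar f) (bar x) = some (bar y)
  succ : A
  predc : A
  d : A
  succ_spec : ∀ n : ℕ, app succ (bar (natEmbed n)) = some (bar (natEmbed (n + 1)))
  pred_spec : ∀ n : ℕ, app predc (bar (natEmbed (n + 1))) = some (bar (natEmbed n))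
  d_spec : ∀ (n m : ℕ) (a b : A),
    oap app (oap app (oap app (app d (bar (natEmbed n)))
        (some (bar (natEmbed m)))) (some a)) (some b)
      = some (if n = m then a else b)
/-- Internal singleton `{x}_int = ⟨{x°}, {⟨0,x⟩}⟩`. -/
noncomputable def vSing {A : Type} (zero : A) (x : VName A) : VName A :=
  VName.mk ({x.deg} : ZFSet) (ULift Unit) (fun _ => zero) (fun _ => x)

/-- Internal doubleton `{x,y}_int = ⟨{x°,y°}, {⟨0,x⟩,⟨1,y⟩}⟩`. -/
noncomputable def vDoub {A : Type} (zero one : A) (x y : VName A) : VName A :=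
  VName.mk ({x.deg, y.deg} : ZFSet) (ULift Bool)
    (fun b => if b.down then one else zero)
    (fun b => if b.down then y else x)

/-- Internal ordered pair
`⟨x,y⟩_int = ⟨⟨x°,y°⟩, {⟨0,{x}_int⟩, ⟨1,{x,y}_int⟩}⟩`. -/
noncomputable def vPair {A : Type} (zero one : A) (x y : VName A) : VName A :=
  VName.mk (ZFSet.pair x.deg y.deg) (ULift Bool)
    (fun b => if b.down then one else zero)
    (fun b => if b.down then vDoub zero one x y else vSing zero x)
/-- The canonical name of a set: `ẋ = ⟨x, {⟨ȳ, ẏ⟩ | y ∈ x}⟩` (by `∈`-recursion);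
for `n ∈ ω` this is `ṅ = ⟨n, {⟨m̄, ṁ⟩ | m < n}⟩`. -/
noncomputable def dotSet {A : Type} (P : PCAF A) : ZFSet → VName A :=
  WellFounded.fix ZFSet.mem_wf fun x ih =>
    VName.mk x {y : ZFSet // y ∈ x} (fun y => P.bar y.1) (fun y => ih y.1 y.2)

/-- Canonical names for finite-type objects: `ẋ` for `x` of type `o` is the
canonical name of the natural number `x`, and
`ḟ = ⟨f, {⟨x̄, ⟨ẋ,ẏ⟩_int⟩ | x ∈ F_σ, f(x) = y}⟩` for `f` of type `(σ)τ`. -/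
noncomputable def dotFT {A : Type} (P : PCAF A) : FType → ZFSet → VName A
  | .o, x => dotSet P x
  | .arrow σ τ, f =>
      VName.mk f {p : ZFSet × ZFSet // p.1 ∈ Fext σ ∧ ZFSet.pair p.1 p.2 ∈ f}
        (fun p => P.bar p.1.1)
        (fun p => vPair (P.bar (natEmbed 0)) (P.bar (natEmbed 1))
          (dotFT P σ p.1.1) (dotFT P τ p.1.2))

/-- The canonical name `Ḟ_σ = ⟨F_σ, {⟨x̄, ẋ⟩ | x ∈ F_σ}⟩`. -/
noncomputable def dotF {A : Type} (P : PCAF A) (σ : FType) : VName A :=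
  VName.mk (Fext σ) {x : ZFSet // x ∈ Fext σ} (fun x => P.bar x.1)
    (fun x => dotFT P σ x.1)
/-- A name `x ∈ V_tr(A)` is injective if (i) `x° = {u° | ∃a ⟨a,u⟩ ∈ x*}` and
(ii) for `⟨a,u⟩, ⟨b,v⟩ ∈ x*`, `a = b` iff `u° = v°`. -/
def InjectiveName {A : Type} (v : VName A) : Prop :=
  (∀ z : ZFSet, z ∈ v.deg ↔ ∃ i : v.ι, (v.elt i).deg = z) ∧
  ∀ i j : v.ι, (v.lab i = v.lab j ↔ (v.elt i).deg = (v.elt j).deg)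


section AuxLemmas

theorem mem_omega' {x : ZFSet} (h : x ∈ ZFSet.omega) : ∃ n, x = ZFSet.mk (PSet.ofNat n) := by
  induction x using Quotient.inductionOn with
  | _ p => obtain ⟨⟨n⟩, hn⟩ := ZFSet.mk_mem_iff.mp h; exact ⟨n, ZFSet.sound hn⟩

theorem ofNat_mem_omega (n : ℕ) : ZFSet.mk (PSet.ofNat n) ∈ ZFSet.omega :=
  ZFSet.mk_mem_iff.mpr ⟨⟨n⟩, PSet.Equiv.refl _⟩

theorem mem_ofNat_omega : ∀ (n : ℕ) {y : ZFSet}, y ∈ ZFSet.mk (PSet.ofNat n) → y ∈ ZFSet.omega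
  | 0, y, hy => absurd hy (ZFSet.notMem_empty y)
  | n + 1, y, hy => by
    have : y ∈ insert (ZFSet.mk (PSet.ofNat n)) (ZFSet.mk (PSet.ofNat n)) := hy
    rcases ZFSet.mem_insert_iff.mp this with h | h
    · exact h ▸ ofNat_mem_omega n
    · exact mem_ofNat_omega n h

theorem omega_trans {x y : ZFSet} (hx : x ∈ ZFSet.omega) (hy : y ∈ x) : y ∈ ZFSet.omega := by
  obtain ⟨n, rfl⟩ := mem_omega' hx
  exact mem_ofNat_omega n hy

theorem dotSet_def {A : Type} (P : PCAF A) (x : ZFSet) :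
    dotSet P x = VName.mk x {y : ZFSet // y ∈ x} (fun y => P.bar y.1)
      (fun y => dotSet P y.1) :=
  WellFounded.fix_eq _ _ _

theorem dotSet_deg {A : Type} (P : PCAF A) (x : ZFSet) : (dotSet P x).deg = x := by
  rw [dotSet_def]; rfl

theorem dotFT_deg {A : Type} (P : PCAF A) (σ : FType) (x : ZFSet) :
    (dotFT P σ x).deg = x := by
  cases σ with
  | o => exact dotSet_deg P x
  | arrow σ τ => rfl

end AuxLemmas

/-- For a pca `A` over `𝔽` and every finite type `σ`: (i) `ẋ` is injective for
every `x ∈ F_σ`; (ii) `Ḟ_σ` is injective; (iii) if some `a ∈ A` realizes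
`ẋ = ẏ` for `x, y ∈ F_σ`, then `x = y` (absoluteness). -/
theorem dot_injective_absolute {A : Type} (P : PCAF A) (σ : FType) :
    (∀ x : ZFSet, x ∈ Fext σ → InjectiveName (dotFT P σ x)) ∧
    InjectiveName (dotF P σ) ∧
    (∀ x y : ZFSet, x ∈ Fext σ → y ∈ Fext σ →
      (∃ a : A, RealEq P.toPCA a (dotFT P σ x) (dotFT P σ y)) → x = y) := by
  constructor
  · intro x hx
    cases σ with
    | o =>
      show InjectiveName (dotSet P x)
      rw [dotSet_def]
      unfold InjectiveName
      simp only [VName.deg, VName.ι, VName.lab, VName.elt]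
      constructor
      · intro z
        constructor
        · intro hz
          exact ⟨⟨z, hz⟩, dotSet_deg P z⟩
        · rintro ⟨i, hi⟩
          have hi' : (dotSet P i.1).deg = z := hi
          rw [dotSet_deg] at hi'
          exact hi' ▸ i.2
      · intro i j
        show P.bar i.1 = P.bar j.1 ↔ (dotSet P i.1).deg = (dotSet P j.1).deg
        rw [dotSet_deg, dotSet_deg]
        constructor
        · intro h
          exact P.bar_inj i.1 j.1 ⟨.o, omega_trans hx i.2⟩ ⟨.o, omega_trans hx j.2⟩ h
        · intro h; rw [h]
    | arrow σ τ =>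
      have hf : ZFSet.IsFunc (Fext σ) (Fext τ) x := ZFSet.mem_funs.mp hx
      constructor
      · intro z
        show z ∈ x ↔ ∃ p : {p : ZFSet × ZFSet // p.1 ∈ Fext σ ∧ ZFSet.pair p.1 p.2 ∈ x}, _
        constructor
        · intro hz
          obtain ⟨a, ha, b, hb, rfl⟩ := ZFSet.mem_prod.mp (hf.1 hz)
          refine ⟨⟨(a, b), ha, hz⟩, ?_⟩
          show ZFSet.pair (dotFT P σ a).deg (dotFT P τ b).deg = _
          rw [dotFT_deg, dotFT_deg]
        · rintro ⟨p, hp⟩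
          have : ZFSet.pair (dotFT P σ p.1.1).deg (dotFT P τ p.1.2).deg = z := hp
          rw [dotFT_deg, dotFT_deg] at this
          exact this ▸ p.2.2
      · intro i j
        show P.bar i.1.1 = P.bar j.1.1 ↔
          ZFSet.pair (dotFT P σ i.1.1).deg (dotFT P τ i.1.2).deg
            = ZFSet.pair (dotFT P σ j.1.1).deg (dotFT P τ j.1.2).deg
        rw [dotFT_deg, dotFT_deg, dotFT_deg, dotFT_deg]
        constructor
        · intro h
          have h1 : i.1.1 = j.1.1 := P.bar_inj i.1.1 j.1.1 ⟨σ, i.2.1⟩ ⟨σ, j.2.1⟩ h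
          obtain ⟨w, _, hw⟩ := hf.2 i.1.1 i.2.1
          have h2 : i.1.2 = j.1.2 := by
            rw [hw i.1.2 i.2.2, hw j.1.2 (h1 ▸ j.2.2)]
          rw [h1, h2]
        · intro h
          obtain ⟨h1, _⟩ := ZFSet.pair_injective h
          rw [h1]
  constructor
  · constructor
    · intro z
      show z ∈ Fext σ ↔ ∃ i : {x : ZFSet // x ∈ Fext σ}, (dotFT P σ i.1).deg = z
      constructor
      · intro hz; exact ⟨⟨z, hz⟩, dotFT_deg P σ z⟩
      · rintro ⟨i, hi⟩; rw [dotFT_deg] at hi; exact hi ▸ i.2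
    · intro i j
      show P.bar i.1 = P.bar j.1 ↔ (dotFT P σ i.1).deg = (dotFT P σ j.1).deg
      rw [dotFT_deg, dotFT_deg]
      constructor
      · intro h; exact P.bar_inj i.1 j.1 ⟨σ, i.2⟩ ⟨σ, j.2⟩ h
      · intro h; rw [h]
  · rintro x y hx hy ⟨a, ha⟩
    cases ha with
    | intro a _ _ bf cf bg cg hdeg _ _ _ _ _ _ =>
      rw [dotFT_deg, dotFT_deg] at hdeg
      exact hdeg
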